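/- Let Y and Z be real Hilbert spaces and K : Y × Z → ℝ a function such that K(·,z) is convex and lower semicontinuous for every z ∈ Z, and K(y,·) is concave and upper semicontinuous for every y ∈ Y. Let T be the associated operator and define H : Y × Z → (-∞, +∞] by H(y, ζ) = sup_{z ∈ Z} ( ⟨ζ, z⟩ + K(y, z) ). Then H is convex and lower semicontinuous on the Hilbert space Y × Z, and for all y, z, y*, z* one has (y*, z*) ∈ T(y, z) if and only if (y*, z) is a subgradient of H at (y, z*), i.e. H(y, z*) + ⟨y*, y' - y⟩ + ⟨z, ζ' - z*⟩ ≤ H(y', ζ') in the extended reals for all (y', ζ') ∈ Y × Z. -/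

import Mathlib

open scoped InnerProductSpace

/-- Any convex lower semicontinuous real-valued function on a real Hilbert space has, at each
point, affine minorants coming within `ε` of the value. -/
lemma exists_affine_minorant {Z : Type*} [NormedAddCommGroup Z] [InnerProductSpace ℝ Z]
    [CompleteSpace Z] (f : Z → ℝ) (hf : ConvexOn ℝ Set.univ f)
    (hlsc : LowerSemicontinuous f) (z : Z) (ε : ℝ) (hε : 0 < ε) :
    ∃ ζ : Z, ∃ b : ℝ, (∀ u, ⟪ζ, u⟫_ℝ + b ≤ f u) ∧ f z - ε < ⟪ζ, z⟫_ℝ + b := by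
  have hepi_closed : IsClosed {p : Z × ℝ | f p.1 ≤ p.2} := by
    have hg : LowerSemicontinuous (fun p : Z × ℝ => f p.1 - p.2) := by
      have h1 : LowerSemicontinuous (fun p : Z × ℝ => f p.1) :=
        hlsc.comp continuous_fst
      have h2 : LowerSemicontinuous (fun p : Z × ℝ => -p.2) :=
        (continuous_snd.neg).lowerSemicontinuous
      simpa [sub_eq_add_neg] using h1.add h2
    have := lowerSemicontinuous_iff_isClosed_preimage.1 hg 0
    convert this using 1
    ext p
    simp [sub_nonpos]
  have hepi_convex : Convex ℝ {p : Z × ℝ | f p.1 ≤ p.2} := by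
    have := hf.convex_epigraph
    simpa using this
  have hx : (z, f z - ε) ∉ {p : Z × ℝ | f p.1 ≤ p.2} := by
    simp only [Set.mem_setOf_eq]
    push_neg
    linarith
  obtain ⟨g, u₀, hgx, hgS⟩ := geometric_hahn_banach_point_closed hepi_convex hepi_closed hx
  set a : Z → ℝ := fun u => g (u, 0) with ha
  set s : ℝ := g (0, 1) with hs
  have hg_eq : ∀ u : Z, ∀ t : ℝ, g (u, t) = a u + t * s := by
    intro u t
    have : (u, t) = (u, (0:ℝ)) + t • ((0:Z), (1:ℝ)) := by
      simp [Prod.ext_iff]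
    rw [this, map_add, map_smul]
    simp [ha, hs, mul_comm]
  have hgS' : ∀ u : Z, ∀ t : ℝ, f u ≤ t → u₀ < a u + t * s := by
    intro u t hut
    have := hgS (u, t) hut
    rwa [hg_eq] at this
  have hspos : 0 < s := by
    rcases lt_or_ge 0 s with h | h
    · exact h
    rcases eq_or_lt_of_le h with h0 | hneg
    · -- s = 0
      exfalso
      have h1 := hgS' z (f z) le_rfl
      have h2 : g (z, f z - ε) < u₀ := hgx
      rw [hg_eq] at h2
      rw [h0] at h1 h2
      linarith
    · -- s < 0 : contradiction by taking t large
      set t : ℝ := max (f z) ((u₀ - a z - 1) / s) with ht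
      have h1 := hgS' z t (le_max_left _ _)
      have h2 : t * s ≤ u₀ - a z - 1 := by
        have htle : (u₀ - a z - 1) / s ≤ t := le_max_right _ _
        calc t * s ≤ ((u₀ - a z - 1) / s) * s := by
              exact mul_le_mul_of_nonpos_right htle hneg.le
          _ = u₀ - a z - 1 := by rw [div_mul_cancel₀ _ hneg.ne]
      linarith
  have hacont : Continuous a := g.continuous.comp (Continuous.prodMk_left 0)
  -- Riesz representation of the functional `u ↦ -(a u)/s`
  set φ : Z →L[ℝ] ℝ := (-s⁻¹) • (g.comp (ContinuousLinearMap.inl ℝ Z ℝ)) with hφ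
  set ζ : Z := (InnerProductSpace.toDual ℝ Z).symm φ with hζ
  have hζ_apply : ∀ u : Z, ⟪ζ, u⟫_ℝ = -(a u) / s := by
    intro u
    rw [hζ, InnerProductSpace.toDual_symm_apply]
    simp [hφ, ha, div_eq_inv_mul]
  refine ⟨ζ, u₀ / s, ?_, ?_⟩
  · intro u
    have h1 := hgS' u (f u) le_rfl
    rw [hζ_apply, ← add_div, div_le_iff₀ hspos]
    linarith
  · have h2 : g (z, f z - ε) < u₀ := hgx
    rw [hg_eq] at h2
    rw [hζ_apply, ← add_div, lt_div_iff₀ hspos]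
    linarith

/-- The negative of an upper semicontinuous real function is lower semicontinuous. -/
lemma usc_neg_lsc {α : Type*} [TopologicalSpace α] {f : α → ℝ}
    (h : UpperSemicontinuous f) : LowerSemicontinuous (fun x => -f x) := by
  intro x y hy
  have hy' : f x < -y := lt_neg.1 hy
  filter_upwards [h x (-y) hy'] with x' hx'
  linarith

lemma le_of_forall_eps {a b : ℝ} (h : ∀ ε : ℝ, 0 < ε → a ≤ b + ε) : a ≤ b := by
  by_contra hc
  push_neg at hc
  have := h ((a - b) / 2) (by linarith)
  linarith

/-- The Arrow–Hurwicz operator `T` associated to a convex–concave function `K`: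
`(y*, z*) ∈ T (y, z)` iff `y*` is a subgradient of `K(·,z)` at `y` and
`z*` is a subgradient of `-K(y,·)` at `z`. -/
def SaddleOperator {Y Z : Type*} [NormedAddCommGroup Y] [InnerProductSpace ℝ Y]
    [NormedAddCommGroup Z] [InnerProductSpace ℝ Z]
    (K : Y → Z → ℝ) (p : Y × Z) : Set (Y × Z) :=
  {q : Y × Z |
    (∀ w : Y, K p.1 p.2 + ⟪q.1, w - p.1⟫_ℝ ≤ K w p.2) ∧
    (∀ w : Z, -K p.1 p.2 + ⟪q.2, w - p.2⟫_ℝ ≤ -K p.1 w)}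

/-- The partial conjugate `H(y,ζ) = sup_z (⟪ζ,z⟫ + K(y,z))`, with values in `(-∞,+∞]`. -/
noncomputable def PartialConjugate {Y Z : Type*}
    [NormedAddCommGroup Y] [InnerProductSpace ℝ Y]
    [NormedAddCommGroup Z] [InnerProductSpace ℝ Z]
    (K : Y → Z → ℝ) (p : Y × Z) : EReal :=
  ⨆ z : Z, ((⟪p.2, z⟫_ℝ + K p.1 z : ℝ) : EReal)

/-- Rockafellar's inversion lemma: `H(y,ζ) = sup_z (⟪ζ,z⟫ + K(y,z))` is convex and
lower semicontinuous on `Y × Z`, and `(y*, z*) ∈ T(y,z)` if and only if `(y*, z)` is a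
subgradient of `H` at `(y, z*)`. -/
theorem partialConjugate_convex_lsc_and_saddleOperator_iff_subgradient
    {Y Z : Type*} [NormedAddCommGroup Y] [InnerProductSpace ℝ Y] [CompleteSpace Y]
    [NormedAddCommGroup Z] [InnerProductSpace ℝ Z] [CompleteSpace Z]
    (K : Y → Z → ℝ)
    (hconv : ∀ z : Z, ConvexOn ℝ Set.univ (fun y => K y z))
    (hlsc : ∀ z : Z, LowerSemicontinuous (fun y => K y z))
    (hconc : ∀ y : Y, ConcaveOn ℝ Set.univ (fun z => K y z))
    (husc : ∀ y : Y, UpperSemicontinuous (fun z => K y z)) :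
    (∀ p q : Y × Z, ∀ t : ℝ, 0 ≤ t → t ≤ 1 →
      PartialConjugate K (t • p + (1 - t) • q) ≤
        (t : EReal) * PartialConjugate K p + ((1 - t : ℝ) : EReal) * PartialConjugate K q) ∧
    LowerSemicontinuous (PartialConjugate K) ∧
    (∀ y y' : Y, ∀ z z' : Z,
      (y', z') ∈ SaddleOperator K (y, z) ↔
        (∀ w : Y, ∀ ζ : Z,
          PartialConjugate K (y, z') + ((⟪y', w - y⟫_ℝ : ℝ) : EReal)
            + ((⟪z, ζ - z'⟫_ℝ : ℝ) : EReal) ≤ PartialConjugate K (w, ζ))) := by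
  -- basic facts about the partial conjugate
  have hge : ∀ (y : Y) (ζ : Z) (u : Z),
      ((⟪ζ, u⟫_ℝ + K y u : ℝ) : EReal) ≤ PartialConjugate K (y, ζ) := fun y ζ u =>
    le_iSup (fun u : Z => ((⟪ζ, u⟫_ℝ + K y u : ℝ) : EReal)) u
  have hle : ∀ (y : Y) (ζ : Z) (c : ℝ), (∀ u : Z, ⟪ζ, u⟫_ℝ + K y u ≤ c) →
      PartialConjugate K (y, ζ) ≤ (c : EReal) := by
    intro y ζ c h
    refine iSup_le fun u => ?_
    exact_mod_cast h u
  refine ⟨?_, ?_, ?_⟩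
  · -- convexity
    intro p q t ht ht1
    refine iSup_le fun u => ?_
    have hK := (hconv u).2 (Set.mem_univ p.1) (Set.mem_univ q.1) ht
      (by linarith : (0:ℝ) ≤ 1 - t) (by ring)
    simp only [smul_eq_mul] at hK
    have key : ⟪(t • p + (1 - t) • q).2, u⟫_ℝ + K (t • p + (1 - t) • q).1 u ≤
        t * (⟪p.2, u⟫_ℝ + K p.1 u) + (1 - t) * (⟪q.2, u⟫_ℝ + K q.1 u) := by
      have hfst : (t • p + (1 - t) • q).1 = t • p.1 + (1 - t) • q.1 := rfl
      have hsnd : (t • p + (1 - t) • q).2 = t • p.2 + (1 - t) • q.2 := rfl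
      rw [hfst, hsnd, inner_add_left, real_inner_smul_left, real_inner_smul_left]
      linarith
    calc ((⟪(t • p + (1 - t) • q).2, u⟫_ℝ + K (t • p + (1 - t) • q).1 u : ℝ) : EReal)
        ≤ ((t * (⟪p.2, u⟫_ℝ + K p.1 u) + (1 - t) * (⟪q.2, u⟫_ℝ + K q.1 u) : ℝ) : EReal) := by
          exact_mod_cast key
      _ = (t : EReal) * ((⟪p.2, u⟫_ℝ + K p.1 u : ℝ) : EReal)
          + ((1 - t : ℝ) : EReal) * ((⟪q.2, u⟫_ℝ + K q.1 u : ℝ) : EReal) := by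
          rw [EReal.coe_add, EReal.coe_mul, EReal.coe_mul]
      _ ≤ (t : EReal) * PartialConjugate K p + ((1 - t : ℝ) : EReal) * PartialConjugate K q := by
          refine add_le_add ?_ ?_
          · exact mul_le_mul_of_nonneg_left (hge p.1 p.2 u) (by exact_mod_cast ht)
          · exact mul_le_mul_of_nonneg_left (hge q.1 q.2 u)
              (by exact_mod_cast (by linarith : (0:ℝ) ≤ 1 - t))
  · -- lower semicontinuity
    have hterm : ∀ u : Z, LowerSemicontinuous
        fun p : Y × Z => ((⟪p.2, u⟫_ℝ + K p.1 u : ℝ) : EReal) := by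
      intro u
      have h1 : LowerSemicontinuous fun p : Y × Z => ⟪p.2, u⟫_ℝ + K p.1 u := by
        have hc : Continuous fun p : Y × Z => ⟪p.2, u⟫_ℝ :=
          continuous_snd.inner continuous_const
        exact hc.lowerSemicontinuous.add ((hlsc u).comp continuous_fst)
      exact continuous_coe_real_ereal.comp_lowerSemicontinuous h1
        EReal.coe_strictMono.monotone
    exact lowerSemicontinuous_iSup hterm
  · -- the subgradient characterization
    intro y y' z z'
    simp only [SaddleOperator, Set.mem_setOf_eq]
    constructor
    · rintro ⟨hA, hB⟩ w ζ
      have hub : PartialConjugate K (y, z') ≤ ((K y z + ⟪z', z⟫_ℝ : ℝ) : EReal) := by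
        refine hle y z' _ fun u => ?_
        have h := hB u
        have hsub : ⟪z', u - z⟫_ℝ = ⟪z', u⟫_ℝ - ⟪z', z⟫_ℝ := inner_sub_right _ _ _
        linarith
      calc PartialConjugate K (y, z') + ((⟪y', w - y⟫_ℝ : ℝ) : EReal)
            + ((⟪z, ζ - z'⟫_ℝ : ℝ) : EReal)
          ≤ ((K y z + ⟪z', z⟫_ℝ + ⟪y', w - y⟫_ℝ + ⟪z, ζ - z'⟫_ℝ : ℝ) : EReal) := by
            rw [EReal.coe_add, EReal.coe_add]
            exact add_le_add (add_le_add hub le_rfl) le_rfl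
        _ ≤ ((⟪ζ, z⟫_ℝ + K w z : ℝ) : EReal) := by
            have hsub : ⟪z, ζ - z'⟫_ℝ = ⟪z, ζ⟫_ℝ - ⟪z, z'⟫_ℝ := inner_sub_right _ _ _
            have h1 : ⟪z, ζ⟫_ℝ = ⟪ζ, z⟫_ℝ := real_inner_comm _ _
            have h2 : ⟪z', z⟫_ℝ = ⟪z, z'⟫_ℝ := real_inner_comm _ _
            have h3 := hA w
            exact EReal.coe_le_coe_iff.2 (by linarith)
        _ ≤ PartialConjugate K (w, ζ) := hge w ζ z
    · intro hS
      constructor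
      · -- y' is a subgradient of K(·,z) at y
        intro w
        refine le_of_forall_eps fun ε hε => ?_
        obtain ⟨ζ₀, b, hmin, hclose⟩ := exists_affine_minorant (fun u => -K w u)
          (by exact (hconc w).neg) (usc_neg_lsc (husc w)) z ε hε
        have hub : PartialConjugate K (w, ζ₀) ≤ ((-b : ℝ) : EReal) :=
          hle w ζ₀ _ fun u => by have := hmin u; linarith
        have hlow := hge y z' z
        have h := hS w ζ₀
        have hchain : ((⟪z', z⟫_ℝ + K y z : ℝ) : EReal) + ((⟪y', w - y⟫_ℝ : ℝ) : EReal)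
            + ((⟪z, ζ₀ - z'⟫_ℝ : ℝ) : EReal) ≤ ((-b : ℝ) : EReal) :=
          le_trans (add_le_add (add_le_add hlow le_rfl) le_rfl) (le_trans h hub)
        have hreal : ⟪z', z⟫_ℝ + K y z + ⟪y', w - y⟫_ℝ + ⟪z, ζ₀ - z'⟫_ℝ ≤ -b := by
          rw [← EReal.coe_add, ← EReal.coe_add] at hchain
          exact_mod_cast hchain
        have hsub : ⟪z, ζ₀ - z'⟫_ℝ = ⟪z, ζ₀⟫_ℝ - ⟪z, z'⟫_ℝ := inner_sub_right _ _ _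
        have h1 : ⟪z, ζ₀⟫_ℝ = ⟪ζ₀, z⟫_ℝ := real_inner_comm _ _
        have h2 : ⟪z', z⟫_ℝ = ⟪z, z'⟫_ℝ := real_inner_comm _ _
        linarith
      · -- z' is a subgradient of -K(y,·) at z
        intro u
        refine le_of_forall_eps fun ε hε => ?_
        obtain ⟨ζ₀, b, hmin, hclose⟩ := exists_affine_minorant (fun v => -K y v)
          (by exact (hconc y).neg) (usc_neg_lsc (husc y)) z ε hε
        have hub : PartialConjugate K (y, ζ₀) ≤ ((-b : ℝ) : EReal) :=
          hle y ζ₀ _ fun v => by have := hmin v; linarith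
        have hlow := hge y z' u
        have h := hS y ζ₀
        have hzero : ⟪y', y - y⟫_ℝ = 0 := by simp
        rw [hzero] at h
        have hchain : ((⟪z', u⟫_ℝ + K y u : ℝ) : EReal) + ((0 : ℝ) : EReal)
            + ((⟪z, ζ₀ - z'⟫_ℝ : ℝ) : EReal) ≤ ((-b : ℝ) : EReal) :=
          le_trans (add_le_add (add_le_add hlow le_rfl) le_rfl) (le_trans h hub)
        have hreal : ⟪z', u⟫_ℝ + K y u + 0 + ⟪z, ζ₀ - z'⟫_ℝ ≤ -b := by
          rw [← EReal.coe_add, ← EReal.coe_add] at hchain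
          exact_mod_cast hchain
        have hsub : ⟪z, ζ₀ - z'⟫_ℝ = ⟪z, ζ₀⟫_ℝ - ⟪z, z'⟫_ℝ := inner_sub_right _ _ _
        have hsub' : ⟪z', u - z⟫_ℝ = ⟪z', u⟫_ℝ - ⟪z', z⟫_ℝ := inner_sub_right _ _ _
        have h1 : ⟪z, ζ₀⟫_ℝ = ⟪ζ₀, z⟫_ℝ := real_inner_comm _ _
        have h2 : ⟪z', z⟫_ℝ = ⟪z, z'⟫_ℝ := real_inner_comm _ _
        linarith
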